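/- If sup_{δ > 0} K(δ) < ∞ (where K(δ) is the best uniform δ-near-unconditionality constant achievable by passing to subsequences of normalized weakly null sequences), then there exists a constant C such that every normalized weakly null sequence has a quasi-greedy subsequence with constant C. -/

import Mathlib

open Filter

/-- Weakly null sequence. -/
def IsWeaklyNull {X : Type*} [NormedAddCommGroup X] [NormedSpace ℝ X] (x : ℕ → X) : Prop :=
  ∀ f : X →L[ℝ] ℝ, Tendsto (fun i => f (x i)) atTop (nhds 0)

/-- Basic sequence with basis constant at most `C`. -/
def IsBasicWith {X : Type*} [NormedAddCommGroup X] [NormedSpace ℝ X] (C : ℝ) (y : ℕ → X) : Prop :=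
  ∀ a : ℕ →₀ ℝ, ∀ n : ℕ,
    ‖∑ i ∈ a.support.filter (· < n), a i • y i‖ ≤ C * ‖∑ i ∈ a.support, a i • y i‖

/-- `δ`-near-unconditional with constant `C`. -/
def NearUncondWith {X : Type*} [NormedAddCommGroup X] [NormedSpace ℝ X]
    (δ C : ℝ) (y : ℕ → X) : Prop :=
  IsBasicWith C y ∧
    ∀ a : ℕ →₀ ℝ, (∀ i, |a i| ≤ 1) → ∀ E : Finset ℕ, (∀ i ∈ E, δ ≤ |a i|) →
      ‖∑ i ∈ E, a i • y i‖ ≤ C * ‖∑ i ∈ a.support, a i • y i‖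

/-- Quasi-greedy with constant `C`: `y` is a basic sequence with constant `C` and for all
`δ ≥ 0` and finitely supported `a`, projecting onto `E = {i : |aᵢ| ≥ δ}` costs at most a
factor `C`.  The set `E` is characterized by `i ∈ E ↔ aᵢ ≠ 0 ∧ δ ≤ |aᵢ|`. -/
def QuasiGreedyWith {X : Type*} [NormedAddCommGroup X] [NormedSpace ℝ X]
    (C : ℝ) (y : ℕ → X) : Prop :=
  IsBasicWith C y ∧
    ∀ a : ℕ →₀ ℝ, ∀ δ : ℝ, 0 ≤ δ → ∀ E : Finset ℕ,
      (∀ i, i ∈ E ↔ (a i ≠ 0 ∧ δ ≤ |a i|)) →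
      ‖∑ i ∈ E, a i • y i‖ ≤ C * ‖∑ i ∈ a.support, a i • y i‖

section Helpers

variable {X : Type*} [NormedAddCommGroup X] [NormedSpace ℝ X]

private lemma isBasicWith_mono {C C' : ℝ} (hCC' : C ≤ C') {y : ℕ → X}
    (h : IsBasicWith C y) : IsBasicWith C' y := fun a n =>
  (h a n).trans (mul_le_mul_of_nonneg_right hCC' (norm_nonneg _))

private lemma nearUncondWith_mono {δ C C' : ℝ} (hCC' : C ≤ C') {y : ℕ → X}
    (h : NearUncondWith δ C y) : NearUncondWith δ C' y :=
  ⟨isBasicWith_mono hCC' h.1, fun a ha E hE =>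
    (h.2 a ha E hE).trans (mul_le_mul_of_nonneg_right hCC' (norm_nonneg _))⟩

private lemma isWeaklyNull_comp {x : ℕ → X} (hx : IsWeaklyNull x) {τ : ℕ → ℕ}
    (hτ : StrictMono τ) : IsWeaklyNull (x ∘ τ) := fun f =>
  (hx f).comp hτ.tendsto_atTop

private lemma embDomain_sum (a : ℕ →₀ ℝ) {τ : ℕ → ℕ} (hτ : StrictMono τ)
    (y : ℕ → X) (s : Finset ℕ) :
    ∑ i ∈ s.map ⟨τ, hτ.injective⟩, (Finsupp.embDomain ⟨τ, hτ.injective⟩ a) i • y i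
      = ∑ i ∈ s, a i • (y ∘ τ) i := by
  rw [Finset.sum_map]
  refine Finset.sum_congr rfl fun i _ => ?_
  rw [Finsupp.embDomain_apply_self]
  rfl

private lemma isBasicWith_comp {C : ℝ} {y : ℕ → X} (h : IsBasicWith C y) {τ : ℕ → ℕ}
    (hτ : StrictMono τ) : IsBasicWith C (y ∘ τ) := by
  intro a n
  set e : ℕ ↪ ℕ := ⟨τ, hτ.injective⟩ with he
  have hsupp : (Finsupp.embDomain e a).support = a.support.map e :=
    Finsupp.support_embDomain e a
  have hfilter : (a.support.map e).filter (· < τ n) = (a.support.filter (· < n)).map e := by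
    rw [Finset.filter_map]
    congr 1
    apply Finset.filter_congr
    intro i _
    simp only [he, Function.comp, Function.Embedding.coeFn_mk, eq_iff_iff]
    exact hτ.lt_iff_lt
  have h2 := h (Finsupp.embDomain e a) (τ n)
  rw [hsupp, hfilter, embDomain_sum a hτ y, embDomain_sum a hτ y] at h2
  exact h2
private lemma nearUncondWith_comp {δ C : ℝ} {y : ℕ → X} (h : NearUncondWith δ C y)
    {τ : ℕ → ℕ} (hτ : StrictMono τ) : NearUncondWith δ C (y ∘ τ) := by
  refine ⟨isBasicWith_comp h.1 hτ, ?_⟩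
  intro a ha E hE
  set e : ℕ ↪ ℕ := ⟨τ, hτ.injective⟩ with he
  have ha' : ∀ i, |(Finsupp.embDomain e a) i| ≤ 1 := by
    intro i
    by_cases hi : i ∈ Set.range τ
    · obtain ⟨j, rfl⟩ := hi
      rw [show τ j = e j from rfl, Finsupp.embDomain_apply_self]
      exact ha j
    · rw [Finsupp.embDomain_notin_range _ _ _ hi]
      simp
  have hE' : ∀ i ∈ E.map e, δ ≤ |(Finsupp.embDomain e a) i| := by
    intro i hi
    obtain ⟨j, hj, rfl⟩ := Finset.mem_map.mp hi
    rw [Finsupp.embDomain_apply_self]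
    exact hE j hj
  have h2 := h.2 (Finsupp.embDomain e a) ha' (E.map e) hE'
  rw [Finsupp.support_embDomain, embDomain_sum a hτ y, embDomain_sum a hτ y] at h2
  exact h2

private lemma abs_coeff_le {C : ℝ} (hC : 0 ≤ C) {y : ℕ → X} (hy : ∀ i, ‖y i‖ = 1)
    (hb : IsBasicWith C y) (a : ℕ →₀ ℝ) (i : ℕ) :
    |a i| ≤ 2 * C * ‖∑ j ∈ a.support, a j • y j‖ := by
  by_cases hai : a i = 0
  · rw [hai]
    simp only [abs_zero]
    positivity
  · have hisupp : i ∈ a.support := Finsupp.mem_support_iff.mpr hai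
    have hnotmem : i ∉ a.support.filter (· < i) := by simp
    have hfe : a.support.filter (· < i + 1) = insert i (a.support.filter (· < i)) := by
      ext j
      simp only [Finset.mem_filter, Finset.mem_insert]
      constructor
      · rintro ⟨hjs, hj⟩
        rcases Nat.lt_succ_iff_lt_or_eq.mp hj with h' | h'
        · exact Or.inr ⟨hjs, h'⟩
        · exact Or.inl h'
      · rintro (rfl | ⟨hjs, hj⟩)
        · exact ⟨hisupp, Nat.lt_succ_self _⟩
        · exact ⟨hjs, Nat.lt_succ_of_lt hj⟩
    have hsum : a i • y i = (∑ j ∈ a.support.filter (· < i + 1), a j • y j)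
        - ∑ j ∈ a.support.filter (· < i), a j • y j := by
      rw [hfe, Finset.sum_insert hnotmem]
      abel
    have h1 := hb a (i + 1)
    have h2 := hb a i
    have hkey : ‖a i • y i‖ ≤ 2 * C * ‖∑ j ∈ a.support, a j • y j‖ := by
      rw [hsum]
      calc ‖(∑ j ∈ a.support.filter (· < i + 1), a j • y j)
          - ∑ j ∈ a.support.filter (· < i), a j • y j‖
          ≤ ‖∑ j ∈ a.support.filter (· < i + 1), a j • y j‖
            + ‖∑ j ∈ a.support.filter (· < i), a j • y j‖ := norm_sub_le _ _
        _ ≤ C * ‖∑ j ∈ a.support, a j • y j‖ + C * ‖∑ j ∈ a.support, a j • y j‖ :=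
            add_le_add h1 h2
        _ = 2 * C * ‖∑ j ∈ a.support, a j • y j‖ := by ring
    rwa [norm_smul, hy i, mul_one, Real.norm_eq_abs] at hkey

end Helpers
/-- If there is a uniform near-unconditionality constant (i.e. `sup_{δ>0} K(δ) < ∞`),
then there is a constant `C` such that every normalized weakly null sequence has a
quasi-greedy subsequence with constant `C`. -/
theorem uniform_near_uncond_implies_quasi_greedy
    (h : ∃ K : ℝ, ∀ δ : ℝ, 0 < δ → δ ≤ 1 →
      ∀ (X : Type) [NormedAddCommGroup X] [NormedSpace ℝ X] [CompleteSpace X]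
        (x : ℕ → X), (∀ i, ‖x i‖ = 1) → IsWeaklyNull x →
        ∃ φ : ℕ → ℕ, StrictMono φ ∧ NearUncondWith δ K (x ∘ φ)) :
    ∃ C : ℝ, ∀ (X : Type) [NormedAddCommGroup X] [NormedSpace ℝ X] [CompleteSpace X]
      (x : ℕ → X), (∀ i, ‖x i‖ = 1) → IsWeaklyNull x →
      ∃ φ : ℕ → ℕ, StrictMono φ ∧ QuasiGreedyWith C (x ∘ φ) := by
  classical
  obtain ⟨K, hK⟩ := h
  set K' : ℝ := max K 1 with hK'def
  have hK'1 : (1 : ℝ) ≤ K' := le_max_right _ _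
  have hK'pos : (0 : ℝ) < K' := lt_of_lt_of_le one_pos hK'1
  have h2K'pos : (0 : ℝ) < 2 * K' := by linarith
  have h2K'ne : (2 * K') ≠ 0 := ne_of_gt h2K'pos
  have hKK' : ∀ δ : ℝ, 0 < δ → δ ≤ 1 →
      ∀ (X : Type) [NormedAddCommGroup X] [NormedSpace ℝ X] [CompleteSpace X]
        (x : ℕ → X), (∀ i, ‖x i‖ = 1) → IsWeaklyNull x →
        ∃ φ : ℕ → ℕ, StrictMono φ ∧ NearUncondWith δ K' (x ∘ φ) := by
    intro δ h1 h2 X _ _ _ x hx1 hx2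
    obtain ⟨φ, hφ, hNU⟩ := hK δ h1 h2 X x hx1 hx2
    exact ⟨φ, hφ, nearUncondWith_mono (le_max_left _ _) hNU⟩
  -- the scale sequence
  set δseq : ℕ → ℝ := fun j => 1 / (2 * K' * ((j : ℝ) + 1) * 2 ^ j) with hδseqdef
  have hden : ∀ j : ℕ, (0 : ℝ) < 2 * K' * ((j : ℝ) + 1) * 2 ^ j := by
    intro j
    have h1 : (0 : ℝ) < (j : ℝ) + 1 := by positivity
    have h2 : (0 : ℝ) < (2 : ℝ) ^ j := by positivity
    exact mul_pos (mul_pos h2K'pos h1) h2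
  have hδpos : ∀ j, 0 < δseq j := fun j => by
    rw [hδseqdef]; exact one_div_pos.mpr (hden j)
  have hδle1 : ∀ j, δseq j ≤ 1 := by
    intro j
    rw [hδseqdef]
    simp only
    rw [div_le_one (hden j)]
    have h1 : (1 : ℝ) ≤ (j : ℝ) + 1 := by
      have := Nat.cast_nonneg (α := ℝ) j; linarith
    have h2 : (1 : ℝ) ≤ (2 : ℝ) ^ j := one_le_pow₀ (by norm_num)
    have h3 : (1 : ℝ) ≤ 2 * K' := by linarith
    have h4 : (1 : ℝ) ≤ 2 * K' * ((j : ℝ) + 1) := by nlinarith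
    nlinarith
  have hδhalf : ∀ j : ℕ, δseq j ≤ (1 / 2 : ℝ) ^ j := by
    intro j
    rw [hδseqdef]
    simp only
    rw [one_div_pow]
    apply one_div_le_one_div_of_le (by positivity)
    have h1 : (1 : ℝ) ≤ (j : ℝ) + 1 := by
      have := Nat.cast_nonneg (α := ℝ) j; linarith
    have h3 : (1 : ℝ) ≤ 2 * K' := by linarith
    have h4 : (1 : ℝ) ≤ 2 * K' * ((j : ℝ) + 1) := by nlinarith
    have h5 : (0 : ℝ) ≤ (2:ℝ) ^ j := by positivity
    nlinarith
  have hδseqsum : ∀ k : ℕ, ((k : ℝ) + 1) * δseq k ≤ 1 / (2 * K') := by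
    intro k
    have hkpos : (0 : ℝ) < (k : ℝ) + 1 := by positivity
    have h2k : (1 : ℝ) ≤ (2 : ℝ) ^ k := one_le_pow₀ (by norm_num)
    have heq : ((k : ℝ) + 1) * δseq k = 1 / (2 * K' * 2 ^ k) := by
      rw [hδseqdef]
      simp only
      field_simp
    rw [heq]
    apply one_div_le_one_div_of_le h2K'pos
    exact le_mul_of_one_le_right (le_of_lt h2K'pos) h2k
  refine ⟨(1 + K') ^ 2, ?_⟩
  intro X _ _ _ x hxnorm hxwn
  -- chain of subsequences
  obtain ⟨S, hSmono, hSnu, hSfac⟩ :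
      ∃ S : ℕ → (ℕ → ℕ), (∀ n, StrictMono (S n)) ∧
        (∀ n, NearUncondWith (δseq n) K' (x ∘ S n)) ∧
        (∀ n, ∃ θ : ℕ → ℕ, StrictMono θ ∧ S (n + 1) = S n ∘ θ) := by
    have hstep : ∀ ψ : ℕ → ℕ, StrictMono ψ → ∀ j : ℕ,
        ∃ θ : ℕ → ℕ, StrictMono θ ∧ NearUncondWith (δseq j) K' (x ∘ (ψ ∘ θ)) := by
      intro ψ hψ j
      obtain ⟨θ, hθ, hNU⟩ := hKK' (δseq j) (hδpos j) (hδle1 j) X (x ∘ ψ)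
        (fun i => hxnorm _) (isWeaklyNull_comp hxwn hψ)
      exact ⟨θ, hθ, hNU⟩
    choose! θf hθf using hstep
    obtain ⟨ψ₀, hψ₀, hNU₀⟩ := hKK' (δseq 0) (hδpos 0) (hδle1 0) X x hxnorm hxwn
    set S : ℕ → (ℕ → ℕ) := fun n => Nat.rec ψ₀ (fun k ψ => ψ ∘ θf ψ (k + 1)) n with hS
    have hgood : ∀ n, StrictMono (S n) ∧ NearUncondWith (δseq n) K' (x ∘ S n) := by
      intro n
      induction n with
      | zero => exact ⟨hψ₀, hNU₀⟩
      | succ k ih =>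
        have h1 := (hθf (S k) ih.1 (k + 1)).1
        have h2 := (hθf (S k) ih.1 (k + 1)).2
        exact ⟨ih.1.comp h1, h2⟩
    exact ⟨S, fun n => (hgood n).1, fun n => (hgood n).2,
      fun n => ⟨θf (S n) (n + 1), (hθf (S n) (hgood n).1 (n + 1)).1, rfl⟩⟩
  set φd : ℕ → ℕ := fun n => S n n with hφd
  have hφdmono : StrictMono φd := by
    apply strictMono_nat_of_lt_succ
    intro n
    obtain ⟨θ, hθ, hfac⟩ := hSfac n
    have heq : φd (n + 1) = S n (θ (n + 1)) := by
      rw [hφd]; simp only; rw [hfac]; rfl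
    rw [heq, hφd]
    simp only
    exact (hSmono n) (lt_of_lt_of_le (Nat.lt_succ_self n) hθ.le_apply)
  -- factorization through stage m
  have hcomp : ∀ m i j, ∃ nn, S (m + i) j = S m nn := by
    intro m i
    induction i with
    | zero => exact fun j => ⟨j, rfl⟩
    | succ k ih =>
      intro j
      obtain ⟨θ, hθ, hfac⟩ := hSfac (m + k)
      have : S (m + (k + 1)) j = S (m + k) (θ j) := by
        rw [show m + (k + 1) = (m + k) + 1 from rfl, hfac]; rfl
      obtain ⟨nn, hnn⟩ := ih (θ j)
      exact ⟨nn, by rw [this, hnn]⟩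
  have hρall : ∀ m, ∃ ρ : ℕ → ℕ, StrictMono ρ ∧ ∀ i, φd (m + i) = S m (ρ i) := by
    intro m
    have hex : ∀ i, ∃ nn, φd (m + i) = S m nn := fun i => hcomp m i (m + i)
    choose ρ hρ using hex
    refine ⟨ρ, ?_, hρ⟩
    apply strictMono_nat_of_lt_succ
    intro i
    have h1 : S m (ρ i) < S m (ρ (i + 1)) := by
      rw [← hρ i, ← hρ (i + 1)]
      exact hφdmono (by omega)
    exact (hSmono m).lt_iff_lt.mp h1
  set z : ℕ → X := x ∘ φd with hz
  have hznorm : ∀ i, ‖z i‖ = 1 := fun i => hxnorm _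
  have htailNU : ∀ m, NearUncondWith (δseq m) K' (fun i => z (m + i)) := by
    intro m
    obtain ⟨ρ, hρm, hρ⟩ := hρall m
    have hnu := nearUncondWith_comp (hSnu m) hρm
    have heq : ((x ∘ S m) ∘ ρ) = fun i => z (m + i) := by
      funext i
      show x (S m (ρ i)) = z (m + i)
      rw [hz]
      show x (S m (ρ i)) = x (φd (m + i))
      rw [hρ i]
    rwa [heq] at hnu
  have hbasic : IsBasicWith K' z := by
    obtain ⟨ρ, hρm, hρ⟩ := hρall 0
    have hb := isBasicWith_comp (hSnu 0).1 hρm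
    have heq : ((x ∘ S 0) ∘ ρ) = z := by
      funext i
      show x (S 0 (ρ i)) = z i
      rw [hz]
      show x (S 0 (ρ i)) = x (φd i)
      have := hρ i
      rw [Nat.zero_add] at this
      rw [this]
    rwa [heq] at hb
  have hCle : K' ≤ (1 + K') ^ 2 := by nlinarith
  have hC1 : (1 : ℝ) ≤ (1 + K') ^ 2 := by nlinarith
  refine ⟨φd, hφdmono, isBasicWith_mono hCle hbasic, ?_⟩
  intro a δ hδ E hEchar
  show ‖∑ i ∈ E, a i • z i‖ ≤ (1 + K') ^ 2 * ‖∑ i ∈ a.support, a i • z i‖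
  by_cases hEemp : E = ∅
  · rw [hEemp, Finset.sum_empty, norm_zero]
    positivity
  obtain ⟨i₀, hi₀E⟩ := Finset.nonempty_iff_ne_empty.mpr hEemp
  obtain ⟨hi₀ne, hi₀δ⟩ := (hEchar i₀).mp hi₀E
  rcases eq_or_lt_of_le hδ with hδ0 | hδpos'
  · -- δ = 0 : E is the whole support
    have hEs : E = a.support := by
      ext i
      rw [hEchar i, Finsupp.mem_support_iff]
      constructor
      · exact fun hh => hh.1
      · intro hh
        refine ⟨hh, ?_⟩
        rw [← hδ0]
        exact abs_nonneg _
    rw [hEs]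
    nlinarith [norm_nonneg (∑ i ∈ a.support, a i • z i), hC1]
  -- main case : 0 < δ
  have hsuppne : a.support.Nonempty := ⟨i₀, Finsupp.mem_support_iff.mpr hi₀ne⟩
  set F := ∑ j ∈ a.support, a j • z j with hF
  obtain ⟨M, hMmem, hMub⟩ : ∃ Mv : ℝ, (∃ i, |a i| = Mv) ∧ ∀ i, |a i| ≤ Mv := by
    obtain ⟨istar, histar, hstarmax⟩ := Finset.exists_max_image a.support (fun i => |a i|) hsuppne
    refine ⟨|a istar|, ⟨istar, rfl⟩, ?_⟩
    intro i
    by_cases hi : i ∈ a.support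
    · exact hstarmax i hi
    · rw [Finsupp.notMem_support_iff.mp hi, abs_zero]
      exact abs_nonneg _
  obtain ⟨istar, hstareq⟩ := hMmem
  have hMδ : δ ≤ M := le_trans hi₀δ (hMub i₀)
  have hMpos : 0 < M := lt_of_lt_of_le hδpos' hMδ
  have hMne : M ≠ 0 := ne_of_gt hMpos
  have hMF : M ≤ 2 * K' * ‖F‖ := by
    rw [← hstareq]
    exact abs_coeff_le (le_of_lt hK'pos) hznorm hbasic a istar
  have hFpos : 0 < ‖F‖ := by nlinarith [norm_nonneg F]
  set δ' : ℝ := δ / M with hδ'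
  have hδ'pos : 0 < δ' := div_pos hδpos' hMpos
  have hexm : ∃ j : ℕ, δseq j ≤ δ' := by
    obtain ⟨n, hn⟩ := exists_pow_lt_of_lt_one hδ'pos (by norm_num : (1 : ℝ) / 2 < 1)
    exact ⟨n, le_of_lt (lt_of_le_of_lt (hδhalf n) hn)⟩
  set m : ℕ := Nat.find hexm with hmdef
  have hm : δseq m ≤ δ' := Nat.find_spec hexm
  have hmlt : ∀ j, j < m → δ' < δseq j := fun j hj => lt_of_not_ge (Nat.find_min hexm hj)
  set Sh := ∑ i ∈ a.support.filter (· < m), a i • z i with hSh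
  set St := ∑ i ∈ a.support.filter (fun i => ¬ i < m), a i • z i with hSt
  have hsplitF : Sh + St = F := Finset.sum_filter_add_sum_filter_not _ _ _
  have hShb : ‖Sh‖ ≤ K' * ‖F‖ := hbasic a m
  have hStb : ‖St‖ ≤ (1 + K') * ‖F‖ := by
    have hSt' : St = F - Sh := by rw [← hsplitF]; abel
    rw [hSt']
    calc ‖F - Sh‖ ≤ ‖F‖ + ‖Sh‖ := norm_sub_le _ _
      _ ≤ ‖F‖ + K' * ‖F‖ := by linarith
      _ = (1 + K') * ‖F‖ := by ring
  have hEsub : E ⊆ a.support := fun i hi => Finsupp.mem_support_iff.mpr ((hEchar i).mp hi).1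
  have hmδF : (m : ℝ) * δ ≤ ‖F‖ := by
    rcases Nat.eq_zero_or_pos m with hm0 | hmpos
    · rw [hm0]
      simp only [Nat.cast_zero, zero_mul]
      exact le_of_lt hFpos
    · obtain ⟨k, hk⟩ : ∃ k, m = k + 1 := ⟨m - 1, (Nat.succ_pred_eq_of_pos hmpos).symm⟩
      have hδlt : δ' < δseq k := hmlt k (by omega)
      have hδlt' : δ < M * δseq k := by
        have h1 : δ' * M < δseq k * M := mul_lt_mul_of_pos_right hδlt hMpos
        rw [hδ', div_mul_cancel₀ _ hMne] at h1
        linarith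
      have hkey : ((k : ℝ) + 1) * δseq k ≤ 1 / (2 * K') := hδseqsum k
      have hcast : (m : ℝ) = (k : ℝ) + 1 := by rw [hk]; push_cast; ring
      calc (m : ℝ) * δ ≤ (m : ℝ) * (M * δseq k) := by
            apply mul_le_mul_of_nonneg_left (le_of_lt hδlt') (by positivity)
        _ = M * (((k : ℝ) + 1) * δseq k) := by rw [hcast]; ring
        _ ≤ M * (1 / (2 * K')) := mul_le_mul_of_nonneg_left hkey (le_of_lt hMpos)
        _ ≤ (2 * K' * ‖F‖) * (1 / (2 * K')) := by
            apply mul_le_mul_of_nonneg_right hMF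
            positivity
        _ = ‖F‖ := by field_simp
  have hE1 : ‖∑ i ∈ E.filter (· < m), a i • z i‖ ≤ K' * ‖F‖ + ‖F‖ := by
    have hsetEq : (a.support.filter (· < m)).filter (fun i => i ∈ E) = E.filter (· < m) := by
      ext i
      simp only [Finset.mem_filter]
      constructor
      · rintro ⟨⟨_, hlt⟩, hiE⟩; exact ⟨hiE, hlt⟩
      · rintro ⟨hiE, hlt⟩; exact ⟨⟨hEsub hiE, hlt⟩, hiE⟩
    have hsplith := Finset.sum_filter_add_sum_filter_not (a.support.filter (· < m))
      (fun i => i ∈ E) (fun i => a i • z i)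
    rw [hsetEq] at hsplith
    set N := (a.support.filter (· < m)).filter (fun i => ¬ i ∈ E) with hN
    have hNeq : ∑ i ∈ E.filter (· < m), a i • z i = Sh - ∑ i ∈ N, a i • z i := by
      rw [hSh, ← hsplith]; abel
    have hNb : ‖∑ i ∈ N, a i • z i‖ ≤ (m : ℝ) * δ := by
      calc ‖∑ i ∈ N, a i • z i‖ ≤ ∑ i ∈ N, ‖a i • z i‖ := norm_sum_le _ _
        _ ≤ ∑ _i ∈ N, δ := by
            apply Finset.sum_le_sum
            intro i hi
            rw [hN] at hi
            simp only [Finset.mem_filter] at hi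
            have hne : a i ≠ 0 := Finsupp.mem_support_iff.mp hi.1.1
            have hnotE : ¬ (δ ≤ |a i|) := fun hc => hi.2 ((hEchar i).mpr ⟨hne, hc⟩)
            rw [norm_smul, hznorm i, mul_one, Real.norm_eq_abs]
            linarith [lt_of_not_ge hnotE]
        _ = (N.card : ℝ) * δ := by rw [Finset.sum_const, nsmul_eq_mul]
        _ ≤ (m : ℝ) * δ := by
            apply mul_le_mul_of_nonneg_right _ (le_of_lt hδpos')
            have hNcard : N.card ≤ m := by
              have hNsub : N ⊆ Finset.range m := by
                intro i hi
                rw [hN] at hi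
                simp only [Finset.mem_filter] at hi
                exact Finset.mem_range.mpr hi.1.2
              simpa using Finset.card_le_card hNsub
            exact_mod_cast hNcard
    rw [hNeq]
    calc ‖Sh - ∑ i ∈ N, a i • z i‖ ≤ ‖Sh‖ + ‖∑ i ∈ N, a i • z i‖ := norm_sub_le _ _
      _ ≤ K' * ‖F‖ + (m : ℝ) * δ := by linarith
      _ ≤ K' * ‖F‖ + ‖F‖ := by linarith
  have hE2 : ‖∑ i ∈ E.filter (fun i => ¬ i < m), a i • z i‖ ≤ K' * ((1 + K') * ‖F‖) := by
    obtain ⟨_, hnu2⟩ := htailNU m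
    have hinj : Function.Injective (fun i : ℕ => m + i) := fun i j hij => Nat.add_left_cancel hij
    set aM : ℕ →₀ ℝ := M⁻¹ • a with haM
    have haMapp : ∀ j, aM j = M⁻¹ * a j := by
      intro j
      rw [haM, Finsupp.smul_apply, smul_eq_mul]
    set d : ℕ →₀ ℝ := Finsupp.comapDomain (fun i => m + i) aM hinj.injOn with hd
    have hdapp : ∀ i, d i = M⁻¹ * a (m + i) := by
      intro i
      rw [hd, Finsupp.comapDomain_apply, haMapp]
    have hdapp2 : ∀ i, d i = aM (m + i) := by
      intro i
      rw [hdapp i, haMapp]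
    have hd1 : ∀ i, |d i| ≤ 1 := by
      intro i
      rw [hdapp i, abs_mul, abs_inv, abs_of_pos hMpos, inv_mul_le_iff₀ hMpos, mul_one]
      exact hMub (m + i)
    set E₂ := E.filter (fun i => ¬ i < m) with hE₂
    have hE₂mem : ∀ j ∈ E₂, m ≤ j := by
      intro j hj
      rw [hE₂] at hj
      simp only [Finset.mem_filter, not_lt] at hj
      exact hj.2
    set E₂' : Finset ℕ := E₂.preimage (fun i => m + i) hinj.injOn with hE₂'
    have hd2 : ∀ i ∈ E₂', δseq m ≤ |d i| := by
      intro i hi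
      rw [hE₂', Finset.mem_preimage] at hi
      have hiE : m + i ∈ E := by
        rw [hE₂] at hi
        exact (Finset.mem_filter.mp hi).1
      have hδi := ((hEchar _).mp hiE).2
      rw [hdapp i, abs_mul, abs_inv, abs_of_pos hMpos]
      calc δseq m ≤ δ' := hm
        _ = δ / M := hδ'
        _ ≤ |a (m + i)| / M := by gcongr
        _ = M⁻¹ * |a (m + i)| := by rw [div_eq_inv_mul]
    have key := hnu2 d hd1 E₂' hd2
    simp only at key
    have hsum1 : ∑ i ∈ E₂', d i • z (m + i) = M⁻¹ • ∑ j ∈ E₂, a j • z j := by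
      have h1 : ∀ j ∈ E₂, j ∉ Set.range (fun i : ℕ => m + i) → (fun j => aM j • z j) j = 0 := by
        intro j hj hjr
        exact absurd ⟨j - m, by have h := hE₂mem j hj; show m + (j - m) = j; omega⟩ hjr
      have h2 := Finset.sum_preimage (fun i : ℕ => m + i) E₂ hinj.injOn (fun j => aM j • z j) h1
      calc ∑ i ∈ E₂', d i • z (m + i) = ∑ i ∈ E₂', aM (m + i) • z (m + i) := by
            refine Finset.sum_congr rfl fun i _ => ?_
            rw [hdapp2]
        _ = ∑ j ∈ E₂, aM j • z j := by rw [hE₂']; exact h2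
        _ = M⁻¹ • ∑ j ∈ E₂, a j • z j := by
            rw [Finset.smul_sum]
            refine Finset.sum_congr rfl fun j _ => ?_
            rw [haMapp, mul_smul]
    have hdne : ∀ i, d i ≠ 0 ↔ a (m + i) ≠ 0 := by
      intro i
      rw [hdapp i]
      constructor
      · intro hne hc; rw [hc, mul_zero] at hne; exact hne rfl
      · intro hne hc
        rcases mul_eq_zero.mp hc with hc1 | hc2
        · exact (inv_ne_zero hMne) hc1
        · exact hne hc2
    have hdsuppeq : d.support
        = (a.support.filter (fun j => ¬ j < m)).preimage (fun i => m + i) hinj.injOn := by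
      ext i
      rw [Finsupp.mem_support_iff, Finset.mem_preimage, Finset.mem_filter,
        Finsupp.mem_support_iff, hdne i]
      constructor
      · intro hne; exact ⟨hne, by omega⟩
      · exact fun hh => hh.1
    have hsum2 : ∑ i ∈ d.support, d i • z (m + i) = M⁻¹ • St := by
      have h1 : ∀ j ∈ a.support.filter (fun j => ¬ j < m),
          j ∉ Set.range (fun i : ℕ => m + i) → (fun j => aM j • z j) j = 0 := by
        intro j hj hjr
        simp only [Finset.mem_filter, not_lt] at hj
        exact absurd ⟨j - m, by show m + (j - m) = j; omega⟩ hjr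
      have h2 := Finset.sum_preimage (fun i : ℕ => m + i)
        (a.support.filter (fun j => ¬ j < m)) hinj.injOn (fun j => aM j • z j) h1
      calc ∑ i ∈ d.support, d i • z (m + i)
          = ∑ i ∈ (a.support.filter (fun j => ¬ j < m)).preimage (fun i => m + i) hinj.injOn,
              aM (m + i) • z (m + i) := by
            rw [hdsuppeq]
            refine Finset.sum_congr rfl fun i _ => ?_
            rw [hdapp2]
        _ = ∑ j ∈ a.support.filter (fun j => ¬ j < m), aM j • z j := h2
        _ = M⁻¹ • St := by
            rw [hSt, Finset.smul_sum]
            refine Finset.sum_congr rfl fun j _ => ?_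
            rw [haMapp, mul_smul]
    rw [hsum1, hsum2] at key
    rw [norm_smul, norm_smul, Real.norm_eq_abs, abs_inv, abs_of_pos hMpos] at key
    have hMinv : 0 < M⁻¹ := inv_pos.mpr hMpos
    have hcomm : K' * (M⁻¹ * ‖St‖) = M⁻¹ * (K' * ‖St‖) := by ring
    rw [hcomm] at key
    have h3 : ‖∑ j ∈ E₂, a j • z j‖ ≤ K' * ‖St‖ := (mul_le_mul_iff_right₀ hMinv).mp key
    calc ‖∑ i ∈ E.filter (fun i => ¬ i < m), a i • z i‖
        = ‖∑ j ∈ E₂, a j • z j‖ := by rw [hE₂]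
      _ ≤ K' * ‖St‖ := h3
      _ ≤ K' * ((1 + K') * ‖F‖) := mul_le_mul_of_nonneg_left hStb (le_of_lt hK'pos)
  have hsplitE : ∑ i ∈ E, a i • z i
      = (∑ i ∈ E.filter (· < m), a i • z i)
        + ∑ i ∈ E.filter (fun i => ¬ i < m), a i • z i :=
    (Finset.sum_filter_add_sum_filter_not E (· < m) _).symm
  rw [hsplitE]
  calc ‖(∑ i ∈ E.filter (· < m), a i • z i)
        + ∑ i ∈ E.filter (fun i => ¬ i < m), a i • z i‖
      ≤ ‖∑ i ∈ E.filter (· < m), a i • z i‖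
        + ‖∑ i ∈ E.filter (fun i => ¬ i < m), a i • z i‖ := norm_add_le _ _
    _ ≤ (K' * ‖F‖ + ‖F‖) + K' * ((1 + K') * ‖F‖) := add_le_add hE1 hE2
    _ = (1 + K') ^ 2 * ‖F‖ := by ring
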